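/- Ω is an incomputable real number: there is no algorithm that, given n, outputs the n-th bit of the binary expansion of Ω. -/

import Mathlib

/-- Programs and outputs are finite bit strings. -/
abbrev Str := List Bool

/-- A computer is a partial computable function from bit strings to bit strings.
A universal computer can simulate any partial computable function via a fixed prefix. -/
def Univ (U : Str →. Str) : Prop :=
  Partrec U ∧ ∀ F : Str →. Str, Partrec F → ∃ e : Str, ∀ p : Str, U (e ++ p) = F p

/-- A program `p` is elegant (for `U`) if it halts and no strictly shorter program
produces the same output. -/
def Elegant (U : Str →. Str) (p : Str) : Prop :=
  ∃ x : Str, x ∈ U p ∧ ∀ q : Str, q.length < p.length → x ∉ U q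

/-- Kolmogorov complexity of `x` relative to `U`: the length of a shortest program for `x`. -/
noncomputable def Kc (U : Str →. Str) (x : Str) : ℕ :=
  sInf { n : ℕ | ∃ p : Str, p.length = n ∧ x ∈ U p }

/-- The domain of `U` is prefix-free. -/
def PrefixFreeDom (U : Str →. Str) : Prop :=
  ∀ p q : Str, (U p).Dom → (U q).Dom → p <+: q → p = q

/-- A universal prefix-free machine. -/
def UnivPF (U : Str →. Str) : Prop :=
  Partrec U ∧ PrefixFreeDom U ∧
    ∀ F : Str →. Str, Partrec F → PrefixFreeDom F →
      ∃ e : Str, ∀ p : Str, U (e ++ p) = F p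

open Classical in
/-- The halting probability `Ω = Σ_{U(p)↓} 2^(-|p|)`. -/
noncomputable def Omega (U : Str →. Str) : ℝ :=
  ∑' p : Str, if (U p).Dom then ((1 : ℝ) / 2) ^ p.length else 0

/-- The `n`-th bit (0-indexed) of the binary expansion of a real `α`. -/
noncomputable def nthBit (α : ℝ) (n : ℕ) : Bool :=
  decide (⌊α * 2 ^ (n + 1)⌋ % 2 = 1)

/-- The string of the first `n` binary digits of `α`. -/
noncomputable def bitsOf (α : ℝ) (n : ℕ) : Str :=
  (List.range n).map (nthBit α)

/-- An injective encoding of a pair (string, number) as a bit string,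
used to express the sentence `K(x) > n`. -/
def encPair (x : Str) (n : ℕ) : Str :=
  (x.flatMap fun b => [b, b]) ++ [true, false] ++ List.replicate n true

/-- An injective encoding of the sentence `the i-th bit of Ω is b`. -/
def encBit (i : ℕ) (b : Bool) : Str :=
  List.replicate i true ++ [false, b]

/-- A set of pairs is computably enumerable. -/
def CE (S : Set (Str × ℕ)) : Prop :=
  ∃ f : ℕ → Option (Str × ℕ), Computable f ∧ S = { a | ∃ k, f k = some a }

/-- A set of strings is computably enumerable. -/
def CEStr (S : Set Str) : Prop :=
  ∃ f : ℕ → Option Str, Computable f ∧ S = { a | ∃ k, f k = some a }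

namespace S13

/-! ### Kraft inequality -/

theorem kraft_aux : ∀ n : ℕ, ∀ F : Finset Str, (∀ p ∈ F, p.length ≤ n) →
    (∀ p ∈ F, ∀ q ∈ F, p <+: q → p = q) →
    ∑ p ∈ F, ((1 : ℝ)/2) ^ p.length ≤ 1 := by
  intro n
  induction n with
  | zero =>
    intro F hlen _
    have hsub : F ⊆ {([] : Str)} := by
      intro p hp
      simp only [Finset.mem_singleton]
      exact List.eq_nil_of_length_eq_zero (Nat.le_zero.1 (hlen p hp))
    calc ∑ p ∈ F, ((1 : ℝ)/2) ^ p.length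
        ≤ ∑ p ∈ ({([] : Str)} : Finset Str), ((1 : ℝ)/2) ^ p.length :=
          Finset.sum_le_sum_of_subset_of_nonneg hsub (fun p _ _ => by positivity)
      _ = 1 := by simp
  | succ n ih =>
    intro F hlen hpf
    by_cases hnil : ([] : Str) ∈ F
    · have hsub : F ⊆ {([] : Str)} := by
        intro p hp
        simp only [Finset.mem_singleton]
        exact (hpf [] hnil p hp (List.nil_prefix)).symm
      calc ∑ p ∈ F, ((1 : ℝ)/2) ^ p.length
          ≤ ∑ p ∈ ({([] : Str)} : Finset Str), ((1 : ℝ)/2) ^ p.length :=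
            Finset.sum_le_sum_of_subset_of_nonneg hsub (fun p _ _ => by positivity)
        _ = 1 := by simp
    · have key : ∀ b : Bool, ∑ p ∈ F.filter (fun p => p.head? = some b),
          ((1 : ℝ)/2) ^ p.length ≤ 1/2 := by
        intro b
        set Fb := F.filter (fun p => p.head? = some b) with hFb
        have hcons : ∀ p ∈ Fb, p = b :: p.tail := by
          intro p hp
          rcases Finset.mem_filter.1 hp with ⟨_, hh⟩
          cases p with
          | nil => simp at hh
          | cons a t => simp_all
        have hinj : ∀ p ∈ Fb, ∀ q ∈ Fb, p.tail = q.tail → p = q := by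
          intro p hp q hq h
          rw [hcons p hp, hcons q hq, h]
        have himage : ∑ t ∈ Fb.image List.tail, ((1 : ℝ)/2) ^ t.length
            = ∑ p ∈ Fb, ((1 : ℝ)/2) ^ p.tail.length :=
          (Finset.sum_image hinj)
        have hT : ∑ t ∈ Fb.image List.tail, ((1 : ℝ)/2) ^ t.length ≤ 1 := by
          apply ih
          · intro t ht
            rcases Finset.mem_image.1 ht with ⟨p, hp, rfl⟩
            have := hlen p (Finset.mem_filter.1 hp).1
            have hpl : p.length = p.tail.length + 1 := by
              rw [hcons p hp]; simp
            omega
          · intro t ht s hs hts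
            rcases Finset.mem_image.1 ht with ⟨p, hp, rfl⟩
            rcases Finset.mem_image.1 hs with ⟨q, hq, rfl⟩
            have : p <+: q := by
              rw [hcons p hp, hcons q hq]
              exact (List.cons_prefix_cons).2 ⟨rfl, hts⟩
            rw [hpf p (Finset.mem_filter.1 hp).1 q (Finset.mem_filter.1 hq).1 this]
        have : ∑ p ∈ Fb, ((1 : ℝ)/2) ^ p.length
            = (1/2) * ∑ p ∈ Fb, ((1 : ℝ)/2) ^ p.tail.length := by
          rw [Finset.mul_sum]
          apply Finset.sum_congr rfl
          intro p hp
          have hpl : p.length = p.tail.length + 1 := by rw [hcons p hp]; simp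
          rw [hpl, pow_succ]; ring
        rw [this, ← himage]
        nlinarith [hT]
      have hsplit : ∑ p ∈ F, ((1 : ℝ)/2) ^ p.length
          = ∑ p ∈ F.filter (fun p => p.head? = some true), ((1 : ℝ)/2) ^ p.length
          + ∑ p ∈ F.filter (fun p => p.head? = some false), ((1 : ℝ)/2) ^ p.length := by
        rw [← Finset.sum_filter_add_sum_filter_not F (fun p => p.head? = some true)]
        congr 1
        apply Finset.sum_congr
        · apply Finset.filter_congr
          intro p hp
          cases p with
          | nil => exact absurd hp hnil
          | cons a t => cases a <;> simp
        · intros; rfl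
      rw [hsplit]
      have h1 := key true
      have h2 := key false
      linarith

/-! ### Weights and `Omega` -/

open Classical in
noncomputable def wD (U : Str →. Str) (p : Str) : ℝ :=
  if (U p).Dom then ((1 : ℝ) / 2) ^ p.length else 0

theorem omega_eq (U : Str →. Str) : Omega U = ∑' p, wD U p := rfl

theorem wD_nonneg (U : Str →. Str) (p : Str) : 0 ≤ wD U p := by
  unfold wD; split <;> positivity

theorem wD_of_dom {U : Str →. Str} {p : Str} (h : (U p).Dom) :
    wD U p = ((1 : ℝ)/2) ^ p.length := by
  unfold wD; rw [if_pos h]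

theorem sum_wD_le_one {U : Str →. Str} (hpf : PrefixFreeDom U) (F : Finset Str) :
    ∑ p ∈ F, wD U p ≤ 1 := by
  classical
  have h1 : ∑ p ∈ F, wD U p = ∑ p ∈ F.filter (fun p => (U p).Dom), ((1 : ℝ)/2) ^ p.length := by
    rw [Finset.sum_filter]
    apply Finset.sum_congr rfl
    intro p _
    unfold wD
    split <;> simp_all
  rw [h1]
  apply kraft_aux (F.sup List.length)
  · intro p hp
    exact Finset.le_sup (Finset.mem_of_mem_filter p hp)
  · intro p hp q hq hpq
    exact hpf p q (Finset.mem_filter.1 hp).2 (Finset.mem_filter.1 hq).2 hpq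

theorem summable_wD {U : Str →. Str} (hpf : PrefixFreeDom U) : Summable (wD U) :=
  summable_of_sum_le (fun p => wD_nonneg U p) (sum_wD_le_one hpf)

theorem omega_nonneg (U : Str →. Str) : 0 ≤ Omega U := by
  rw [omega_eq]; exact tsum_nonneg (wD_nonneg U)

theorem sum_le_omega {U : Str →. Str} (hpf : PrefixFreeDom U) (F : Finset Str) :
    ∑ p ∈ F, wD U p ≤ Omega U := by
  rw [omega_eq]
  exact Summable.sum_le_tsum F (fun p _ => wD_nonneg U p) (summable_wD hpf)

theorem exists_finset_gt {U : Str →. Str} (hpf : PrefixFreeDom U) {δ : ℝ} (hδ : δ < Omega U) :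
    ∃ F : Finset Str, (∀ p ∈ F, (U p).Dom) ∧ δ < ∑ p ∈ F, ((1 : ℝ)/2) ^ p.length := by
  classical
  have hs : HasSum (wD U) (Omega U) := by
    rw [omega_eq]; exact (summable_wD hpf).hasSum
  have := hs.eventually_const_lt hδ
  rcases this.exists with ⟨F, hF⟩
  refine ⟨F.filter (fun p => (U p).Dom), fun p hp => (Finset.mem_filter.1 hp).2, ?_⟩
  have : ∑ p ∈ F, wD U p = ∑ p ∈ F.filter (fun p => (U p).Dom), ((1 : ℝ)/2) ^ p.length := by
    rw [Finset.sum_filter]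
    apply Finset.sum_congr rfl
    intro p _
    unfold wD
    split <;> simp_all
  rw [← this]
  exact hF

/-! ### Step-bounded evaluation -/

open Nat.Partrec (Code)
open Nat.Partrec.Code Encodable

variable (cU : Code)

def haltsB (p : Str) (k : ℕ) : Bool := (evaln k cU (encode p)).isSome

variable {U : Str →. Str}

theorem halts_mono {p : Str} {k k' : ℕ} (h : k ≤ k') (hh : haltsB cU p k) :
    haltsB cU p k' := by
  unfold haltsB at *
  rw [Option.isSome_iff_exists] at *
  rcases hh with ⟨x, hx⟩
  exact ⟨x, evaln_mono h hx⟩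

variable (hcU : eval cU = fun n => Part.bind (decode (α := Str) n) fun a => ((U a).map encode))

include hcU in
theorem eval_encode (p : Str) : eval cU (encode p) = (U p).map encode := by
  rw [hcU]; simp [encodek]

include hcU in
theorem halts_sound {p : Str} {k : ℕ} (h : haltsB cU p k) : (U p).Dom := by
  unfold haltsB at h
  rw [Option.isSome_iff_exists] at h
  rcases h with ⟨x, hx⟩
  have := evaln_sound hx
  rw [eval_encode cU hcU] at this
  rcases (Part.mem_map_iff _).1 this with ⟨y, hy, _⟩
  exact Part.dom_iff_mem.2 ⟨y, hy⟩

include hcU in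
theorem dom_iff_halts {p : Str} : (U p).Dom ↔ ∃ k, haltsB cU p k := by
  constructor
  · intro h
    rcases Part.dom_iff_mem.1 h with ⟨y, hy⟩
    have : encode y ∈ eval cU (encode p) := by
      rw [eval_encode cU hcU]
      exact Part.mem_map _ hy
    rcases evaln_complete.1 this with ⟨k, hk⟩
    exact ⟨k, by unfold haltsB; rw [Option.isSome_iff_exists]; exact ⟨_, hk⟩⟩
  · rintro ⟨k, hk⟩
    exact halts_sound cU hcU hk

/-! ### The stage approximations -/

def A (k : ℕ) : Finset Str :=
  (Finset.range k).biUnion fun i =>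
    ((decode₂ Str i).filter fun p => haltsB cU p k && decide (p.length ≤ k)).toFinset

theorem mem_A {k : ℕ} {p : Str} :
    p ∈ A cU k ↔ encode p < k ∧ haltsB cU p k ∧ p.length ≤ k := by
  unfold A
  simp only [Finset.mem_biUnion, Finset.mem_range, Option.mem_toFinset,
    Option.mem_filter_iff, Encodable.mem_decode₂, Bool.and_eq_true, decide_eq_true_eq]
  constructor
  · rintro ⟨i, hi, rfl, h1, h2⟩
    exact ⟨hi, h1, h2⟩
  · rintro ⟨h0, h1, h2⟩
    exact ⟨encode p, h0, rfl, h1, h2⟩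

def Nk (k : ℕ) : ℕ :=
  ∑ i ∈ Finset.range k, (decode₂ Str i).elim 0
    fun p => bif haltsB cU p k && decide (p.length ≤ k) then 2 ^ (k - p.length) else 0

noncomputable def Rk (k : ℕ) : ℝ := ∑ p ∈ A cU k, ((1 : ℝ)/2) ^ p.length

theorem Nk_eq (k : ℕ) : Nk cU k = ∑ p ∈ A cU k, 2 ^ (k - p.length) := by
  unfold Nk A
  rw [Finset.sum_biUnion]
  · apply Finset.sum_congr rfl
    intro i _
    cases h : decode₂ Str i with
    | none => simp [h, Option.filter]
    | some q =>
      simp only [h, Option.filter]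
      rcases Bool.eq_false_or_eq_true (haltsB cU q k && decide (q.length ≤ k)) with hb | hb <;>
        simp [hb]
  · intro i _ j _ hij
    simp only [Function.onFun]
    rw [Finset.disjoint_left]
    intro p hp hq
    rw [Option.mem_toFinset, Option.mem_filter_iff] at hp hq
    exact hij ((Encodable.mem_decode₂.1 hp.1).symm.trans (Encodable.mem_decode₂.1 hq.1))

theorem Nk_cast (k : ℕ) : (Nk cU k : ℝ) = Rk cU k * 2 ^ k := by
  rw [Nk_eq, Rk, Finset.sum_mul, Nat.cast_sum]
  apply Finset.sum_congr rfl
  intro p hp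
  have hlen : p.length ≤ k := ((mem_A cU).1 hp).2.2
  push_cast
  rw [eq_comm, div_pow, one_pow, div_mul_eq_mul_div, one_mul,
    div_eq_iff (by positivity : ((2:ℝ) ^ p.length) ≠ 0), ← pow_add]
  congr 1
  omega

include hcU in
theorem Rk_le_omega (hpf : PrefixFreeDom U) (k : ℕ) : Rk cU k ≤ Omega U := by
  have h : Rk cU k = ∑ p ∈ A cU k, wD U p := by
    apply Finset.sum_congr rfl
    intro p hp
    rw [wD_of_dom (halts_sound cU hcU ((mem_A cU).1 hp).2.1)]
  rw [h]
  exact sum_le_omega hpf _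

include hcU in
theorem omega_ge_add (hpf : PrefixFreeDom U) {p : Str} {k : ℕ}
    (hp : (U p).Dom) (hnp : ¬ haltsB cU p k) :
    Rk cU k + ((1 : ℝ)/2) ^ p.length ≤ Omega U := by
  classical
  have hpA : p ∉ A cU k := fun h => hnp ((mem_A cU).1 h).2.1
  have h : Rk cU k + ((1 : ℝ)/2) ^ p.length = ∑ q ∈ insert p (A cU k), wD U q := by
    rw [Finset.sum_insert hpA, wD_of_dom hp, add_comm]
    congr 1
    apply Finset.sum_congr rfl
    intro q hq
    rw [wD_of_dom (halts_sound cU hcU ((mem_A cU).1 hq).2.1)]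
  rw [h]
  exact sum_le_omega hpf _

include hcU in
theorem exists_Rk_gt (hpf : PrefixFreeDom U) {δ : ℝ} (hδ : δ < Omega U) :
    ∃ k, δ < Rk cU k := by
  rcases exists_finset_gt hpf hδ with ⟨F, hFdom, hFsum⟩
  -- each element halts at some stage
  have hstage : ∀ p ∈ F, ∃ s, haltsB cU p s := by
    intro p hp
    exact (dom_iff_halts cU hcU).1 (hFdom p hp)
  classical
  set g : Str → ℕ := fun p => if h : ∃ s, haltsB cU p s then Nat.find h else 0 with hg
  set k := F.sup (fun p => max (encode p + 1) (max (g p) p.length)) with hk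
  have hsub : F ⊆ A cU k := by
    intro p hp
    have hle := Finset.le_sup (f := fun p => max (encode p + 1) (max (g p) p.length)) hp
    rw [← hk] at hle
    have h1 : encode p + 1 ≤ k := le_trans (le_max_left _ _) hle
    have h2 : g p ≤ k := le_trans (le_trans (le_max_left _ _) (le_max_right _ _)) hle
    have h3 : p.length ≤ k := le_trans (le_trans (le_max_right _ _) (le_max_right _ _)) hle
    rw [mem_A]
    refine ⟨by omega, ?_, h3⟩
    have hex := hstage p hp
    have : haltsB cU p (g p) := by
      rw [hg]; simp only [dif_pos hex]
      exact Nat.find_spec hex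
    exact halts_mono cU h2 this
  refine ⟨k, lt_of_lt_of_le hFsum ?_⟩
  unfold Rk
  exact Finset.sum_le_sum_of_subset_of_nonneg hsub (fun q _ _ => by positivity)

/-! ### Binary digits -/

theorem floor_bit (α : ℝ) (m : ℕ) :
    ⌊α * 2 ^ (m + 1)⌋ = 2 * ⌊α * 2 ^ m⌋ + (cond (nthBit α m) 1 0 : ℤ) := by
  have h1 : α * 2 ^ (m + 1) = 2 * (α * 2 ^ m) := by ring
  set a := ⌊α * 2 ^ m⌋ with ha
  have hlow : (a : ℝ) ≤ α * 2 ^ m := Int.floor_le _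
  have hhigh : α * 2 ^ m < a + 1 := Int.lt_floor_add_one _
  have h2 : 2 * a ≤ ⌊α * 2 ^ (m + 1)⌋ := by
    rw [h1]
    apply Int.le_floor.2
    push_cast
    linarith
  have h3 : ⌊α * 2 ^ (m + 1)⌋ < 2 * a + 2 := by
    rw [h1]
    apply Int.floor_lt.2
    push_cast
    linarith
  have hcase : ⌊α * 2 ^ (m + 1)⌋ = 2 * a ∨ ⌊α * 2 ^ (m + 1)⌋ = 2 * a + 1 := by omega
  unfold nthBit
  rcases hcase with hc | hc <;> rw [hc]
  · have : (2 * a) % 2 = 0 := by omega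
    simp [this]
  · have : (2 * a + 1) % 2 = 1 := by omega
    simp [this]

def Gf (f : ℕ → Bool) (c0 : ℕ) : ℕ → ℕ :=
  fun m => Nat.rec c0 (fun n ih => 2 * ih + cond (f n) 1 0) m

theorem Gf_spec {U : Str →. Str} {f : ℕ → Bool}
    (hbits : ∀ n, f n = nthBit (Omega U) n) (m : ℕ) :
    (Gf f (⌊Omega U⌋.toNat) m : ℤ) = ⌊Omega U * 2 ^ m⌋ := by
  induction m with
  | zero =>
    show ((⌊Omega U⌋.toNat : ℤ)) = ⌊Omega U * 2 ^ 0⌋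
    rw [Int.toNat_of_nonneg (Int.floor_nonneg.2 (omega_nonneg U))]
    norm_num
  | succ m ih =>
    show ((2 * Gf f (⌊Omega U⌋.toNat) m + cond (f m) 1 0 : ℕ) : ℤ) = ⌊Omega U * 2 ^ (m + 1)⌋
    rw [floor_bit (Omega U) m]
    push_cast
    rw [← ih, hbits m]
    cases nthBit (Omega U) m <;> simp

/-! ### The halting test -/

def Tst (f : ℕ → Bool) (c0 : ℕ) (p : Str) (k : ℕ) : Bool :=
  decide (Gf f c0 (p.length + 1) * 2 ^ k ≤ Nk cU k * 2 ^ (p.length + 1) + 2 ^ k)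

include hcU in
theorem Tst_sound {f : ℕ → Bool} (hpf : PrefixFreeDom U)
    (hbits : ∀ n, f n = nthBit (Omega U) n) {p : Str} {k : ℕ}
    (hnp : ¬ haltsB cU p k) (ht : Tst cU f (⌊Omega U⌋.toNat) p k) : ¬ (U p).Dom := by
  intro hp
  set m := p.length + 1 with hm
  set G := Gf f (⌊Omega U⌋.toNat) m with hG
  have hΩ := omega_ge_add cU hcU hpf hp hnp
  unfold Tst at ht
  rw [decide_eq_true_eq] at ht
  have ht' : (G : ℝ) * 2 ^ k ≤ (Nk cU k : ℝ) * 2 ^ m + 2 ^ k := by exact_mod_cast ht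
  have hNk := Nk_cast cU k
  have h2k : (0:ℝ) < 2 ^ k := by positivity
  have h2m : (0:ℝ) < 2 ^ m := by positivity
  have hG1 : (G : ℝ) ≤ Rk cU k * 2 ^ m + 1 := by
    rw [hNk] at ht'
    nlinarith
  have hup : Omega U * 2 ^ m < (G : ℝ) + 1 := by
    have hspec := Gf_spec (U := U) hbits m
    rw [← hG] at hspec
    have := Int.lt_floor_add_one (Omega U * 2 ^ m)
    rw [← hspec] at this
    push_cast at this
    exact this
  have hw : ((1:ℝ)/2) ^ p.length * 2 ^ m = 2 := by
    have h1 : ((1:ℝ)/2) ^ p.length = 1 / 2 ^ p.length := by rw [div_pow, one_pow]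
    rw [h1, hm, pow_succ]
    field_simp
  nlinarith

include hcU in
theorem Tst_exists {f : ℕ → Bool} (hpf : PrefixFreeDom U)
    (hbits : ∀ n, f n = nthBit (Omega U) n) (p : Str) :
    ∃ k, Tst cU f (⌊Omega U⌋.toNat) p k := by
  set m := p.length + 1 with hm
  set G := Gf f (⌊Omega U⌋.toNat) m with hG
  have h2m : (0:ℝ) < 2 ^ m := by positivity
  have hlow : (G : ℝ) ≤ Omega U * 2 ^ m := by
    have hspec := Gf_spec (U := U) hbits m
    rw [← hG] at hspec
    have := Int.floor_le (Omega U * 2 ^ m)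
    rw [← hspec] at this
    exact_mod_cast this
  have hδ : ((G : ℝ) - 1) / 2 ^ m < Omega U := by
    rw [div_lt_iff₀ h2m]
    nlinarith
  rcases exists_Rk_gt cU hcU hpf hδ with ⟨k, hk⟩
  refine ⟨k, ?_⟩
  unfold Tst
  rw [decide_eq_true_eq]
  have h2k : (0:ℝ) < 2 ^ k := by positivity
  have hNk := Nk_cast cU k
  have : (G : ℝ) * 2 ^ k ≤ (Nk cU k : ℝ) * 2 ^ m + 2 ^ k := by
    rw [hNk]
    rw [div_lt_iff₀ h2m] at hk
    nlinarith
  exact_mod_cast this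

open Classical in
noncomputable def chi (U : Str →. Str) (p : Str) : Bool := decide (U p).Dom

theorem chi_eq_true {U : Str →. Str} {p : Str} : chi U p = true ↔ (U p).Dom := by
  classical
  unfold chi
  simp

def ffn (f : ℕ → Bool) (c0 : ℕ) (p : Str) (k : ℕ) : Option Bool :=
  bif haltsB cU p k then some true else bif Tst cU f c0 p k then some false else none

include hcU in
theorem chi_eq {f : ℕ → Bool} (hpf : PrefixFreeDom U)
    (hbits : ∀ n, f n = nthBit (Omega U) n) (p : Str) :
    Nat.rfindOpt (ffn cU f (⌊Omega U⌋.toNat) p) = Part.some (chi U p) := by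
  have hsome : ∀ k b, ffn cU f (⌊Omega U⌋.toNat) p k = some b → b = chi U p := by
    intro k b h
    unfold ffn at h
    rcases Bool.eq_false_or_eq_true (haltsB cU p k) with hh | hh
    · rw [hh] at h
      simp only [cond_true, Option.some_inj] at h
      subst h
      exact (chi_eq_true.2 (halts_sound cU hcU hh)).symm
    · rw [hh] at h
      simp only [cond_false] at h
      rcases Bool.eq_false_or_eq_true (Tst cU f (⌊Omega U⌋.toNat) p k) with htt | htt
      · rw [htt] at h
        simp only [cond_true, Option.some_inj] at h
        subst h
        have hnd := Tst_sound cU hcU hpf hbits (by simp [hh]) htt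
        symm
        rw [Bool.eq_false_iff]
        intro hc
        exact hnd (chi_eq_true.1 hc)
      · rw [htt] at h; simp at h
  have hex : ∃ n b, b ∈ ffn cU f (⌊Omega U⌋.toNat) p n := by
    rcases Tst_exists cU hcU hpf hbits p with ⟨k, hk⟩
    refine ⟨k, ?_⟩
    unfold ffn
    rcases Bool.eq_false_or_eq_true (haltsB cU p k) with hh | hh <;> rw [hh] <;> simp [hk]
  have hdom : (Nat.rfindOpt (ffn cU f (⌊Omega U⌋.toNat) p)).Dom := by
    rw [Nat.rfindOpt_dom]
    rcases hex with ⟨n, b, hb⟩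
    exact ⟨n, b, hb⟩
  have hmem : (Nat.rfindOpt (ffn cU f (⌊Omega U⌋.toNat) p)).get hdom ∈
      Nat.rfindOpt (ffn cU f (⌊Omega U⌋.toNat) p) := Part.get_mem hdom
  rcases Nat.rfindOpt_spec hmem with ⟨n, hn⟩
  have := hsome n _ hn
  rw [Part.eq_some_iff]
  rw [← this]
  exact hmem

/-! ### Computability -/

theorem pow2_primrec : Primrec (fun n : ℕ => 2 ^ n) := by
  have h : Primrec (fun n : ℕ => Nat.rec 1 (fun _ ih => 2 * ih) n : ℕ → ℕ) :=
    Primrec.nat_rec₁ 1 ((Primrec.nat_mul.comp (Primrec.const 2) Primrec.snd).to₂)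
  apply h.of_eq
  intro n
  induction n with
  | zero => rfl
  | succ n ih => simp only [pow_succ]; rw [← ih]; simp [Nat.mul_comm]

theorem haltsB_primrec : Primrec₂ (haltsB cU) := by
  have h : Primrec (fun x : Str × ℕ => ((x.2, cU), Encodable.encode x.1)) :=
    ((Primrec.snd.pair (Primrec.const cU)).pair (Primrec.encode.comp Primrec.fst))
  exact (Primrec.option_isSome.comp (primrec_evaln.comp h)).to₂

theorem Nk_primrec : Primrec (Nk cU) := by
  have hg : Primrec₂ (fun (k i : ℕ) => (decode₂ Str i).elim 0
      fun p => bif haltsB cU p k && decide (p.length ≤ k) then 2 ^ (k - p.length) else 0) := by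
    have hinner : Primrec₂ (fun (x : ℕ × ℕ) (p : Str) =>
        bif haltsB cU p x.1 && decide (p.length ≤ x.1) then 2 ^ (x.1 - p.length) else 0) := by
      have hc : Primrec (fun y : (ℕ × ℕ) × Str => haltsB cU y.2 y.1.1 && decide (y.2.length ≤ y.1.1)) := by
        have h1 : Primrec (fun y : (ℕ × ℕ) × Str => haltsB cU y.2 y.1.1) :=
          haltsB_primrec cU |>.comp Primrec.snd (Primrec.fst.comp Primrec.fst)
        have h2 : Primrec (fun y : (ℕ × ℕ) × Str => decide (y.2.length ≤ y.1.1)) :=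
          (Primrec.nat_le.comp (Primrec.list_length.comp Primrec.snd)
            (Primrec.fst.comp Primrec.fst)).decide
        exact Primrec.and.comp h1 h2
      have hv : Primrec (fun y : (ℕ × ℕ) × Str => 2 ^ (y.1.1 - y.2.length)) :=
        pow2_primrec.comp (Primrec.nat_sub.comp (Primrec.fst.comp Primrec.fst)
          (Primrec.list_length.comp Primrec.snd))
      exact (Primrec.cond hc hv (Primrec.const 0)).to₂
    have h0 := Primrec.option_casesOn (Primrec.decode₂.comp Primrec.snd)
      (Primrec.const 0) hinner
    have h1 : Primrec (fun x : ℕ × ℕ => (decode₂ Str x.2).elim 0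
        fun p => bif haltsB cU p x.1 && decide (p.length ≤ x.1)
          then 2 ^ (x.1 - p.length) else 0) :=
      h0.of_eq (fun x => by cases hx : decode₂ Str x.2 <;> simp [hx])
    exact h1.to₂
  have hmap : Primrec fun k : ℕ => (List.range k).map (fun i => (decode₂ Str i).elim 0
      fun p => bif haltsB cU p k && decide (p.length ≤ k) then 2 ^ (k - p.length) else 0) :=
    Primrec.list_map Primrec.list_range hg
  have hsum : Primrec (fun l : List ℕ => l.sum) :=
    (Primrec.list_foldr Primrec.id (Primrec.const 0)
      ((Primrec.nat_add.comp (Primrec.fst.comp Primrec.snd)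
        (Primrec.snd.comp Primrec.snd)).to₂)).of_eq (fun l => rfl)
  apply (hsum.comp hmap).of_eq
  intro k
  rfl

theorem Gf_computable {f : ℕ → Bool} (hf : Computable f) (c0 : ℕ) :
    Computable (Gf f c0) := by
  have hh : Computable₂ (fun (_ : ℕ) (q : ℕ × ℕ) => 2 * q.2 + cond (f q.1) 1 0) := by
    have c1 : Computable (fun x : ℕ × (ℕ × ℕ) => 2 * x.2.2) :=
      (Primrec.nat_mul.comp (Primrec.const 2) (Primrec.snd.comp Primrec.snd)).to_comp
    have c2 : Computable (fun x : ℕ × (ℕ × ℕ) => (cond (f x.2.1) 1 0 : ℕ)) :=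
      Computable.cond (hf.comp (Computable.fst.comp Computable.snd))
        (Computable.const 1) (Computable.const 0)
    exact (Primrec.nat_add.to_comp.comp c1 c2).to₂
  have h := Computable.nat_rec (Computable.id) (Computable.const c0) hh
  exact h.of_eq (fun n => rfl)

theorem Tst_computable {f : ℕ → Bool} (hf : Computable f) (c0 : ℕ) :
    Computable₂ (Tst cU f c0) := by
  have hG : Computable (fun x : Str × ℕ => Gf f c0 (x.1.length + 1) * 2 ^ x.2) := by
    have h1 : Computable (fun x : Str × ℕ => Gf f c0 (x.1.length + 1)) :=
      (Gf_computable hf c0).comp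
        ((Primrec.succ.comp (Primrec.list_length.comp Primrec.fst)).to_comp)
    have h2 : Computable (fun x : Str × ℕ => 2 ^ x.2) :=
      (pow2_primrec.comp Primrec.snd).to_comp
    exact Primrec.nat_mul.to_comp.comp h1 h2
  have hN : Computable (fun x : Str × ℕ => Nk cU x.2 * 2 ^ (x.1.length + 1) + 2 ^ x.2) := by
    have h1 : Computable (fun x : Str × ℕ => Nk cU x.2 * 2 ^ (x.1.length + 1)) :=
      Primrec.nat_mul.to_comp.comp ((Nk_primrec cU |>.comp Primrec.snd).to_comp)
        ((pow2_primrec.comp (Primrec.succ.comp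
          (Primrec.list_length.comp Primrec.fst))).to_comp)
    have h2 : Computable (fun x : Str × ℕ => 2 ^ x.2) :=
      (pow2_primrec.comp Primrec.snd).to_comp
    exact Primrec.nat_add.to_comp.comp h1 h2
  exact (Primrec.nat_le.decide.to_comp.comp hG hN).to₂

theorem ffn_computable {f : ℕ → Bool} (hf : Computable f) (c0 : ℕ) :
    Computable₂ (ffn cU f c0) := by
  have h1 : Computable (fun x : Str × ℕ => haltsB cU x.1 x.2) :=
    (haltsB_primrec cU).to_comp.comp Computable.fst Computable.snd
  have h2 : Computable (fun x : Str × ℕ => Tst cU f c0 x.1 x.2) :=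
    (Tst_computable cU hf c0).comp Computable.fst Computable.snd
  exact (Computable.cond h1 (Computable.const (some true))
    (Computable.cond h2 (Computable.const (some false)) (Computable.const none))).to₂

include hcU in
theorem chi_computable {f : ℕ → Bool} (hf : Computable f) (hpf : PrefixFreeDom U)
    (hbits : ∀ n, f n = nthBit (Omega U) n) :
    Computable (chi U) := by
  have h := Partrec.rfindOpt (ffn_computable cU hf ⌊Omega U⌋.toNat)
  have h2 : ∀ p : Str, Nat.rfindOpt (ffn cU f (⌊Omega U⌋.toNat) p) = (chi U : Str →. Bool) p :=
    fun p => chi_eq cU hcU hpf hbits p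
  exact h.of_eq h2

/-! ### The diagonal machine -/

theorem shape_prefix {a b : ℕ} (h : (List.replicate a true ++ [false] : Str) <+:
    (List.replicate b true ++ [false])) :
    a = b := by
  have hlen := h.length_le
  simp only [List.length_append, List.length_replicate, List.length_cons,
    List.length_nil] at hlen
  have hab : a ≤ b := by omega
  rcases eq_or_lt_of_le hab with heq | hlt
  · exact heq
  · exfalso
    have hia : a < (List.replicate a true ++ [false] : Str).length := by
      simp
    have h1 : (List.replicate a true ++ [false] : Str)[a]'hia = false := by
      rw [List.getElem_append_right (by simp)]
      simp
    have hib : a < (List.replicate b true ++ [false] : Str).length := by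
      simp; omega
    have h2 : (List.replicate b true ++ [false] : Str)[a]'hib = true := by
      rw [List.getElem_append_left (by simp; omega)]
      simp
    have h3 := h.getElem hia
    rw [h1] at h3
    rw [h2] at h3
    exact Bool.false_ne_true h3

theorem replicate_primrec : Primrec (fun n : ℕ => (List.replicate n true : Str)) := by
  have h : Primrec (fun n : ℕ => (Nat.rec [] (fun _ ih => true :: ih) n : Str)) :=
    Primrec.nat_rec₁ [] ((Primrec.list_cons.comp (Primrec.const true) Primrec.snd).to₂)
  apply h.of_eq
  intro n
  induction n with
  | zero => rfl
  | succ n ih => simp only [List.replicate_succ]; rw [← ih]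

end S13

/-- `Ω` is incomputable: no algorithm outputs, given `n`, the `n`-th bit of the
binary expansion of `Ω`. -/
theorem stmt13 (U : Str →. Str) (hU : UnivPF U) :
    ¬ ∃ f : ℕ → Bool, Computable f ∧ ∀ n : ℕ, f n = nthBit (Omega U) n := by
  classical
  rintro ⟨f, hfc, hbits⟩
  obtain ⟨hUpart, hpf, huniv⟩ := hU
  obtain ⟨cU, hcU⟩ := Nat.Partrec.Code.exists_code.1 hUpart
  have hchi : Computable (S13.chi U) := S13.chi_computable cU hcU hfc hpf hbits
  set P : Str → Bool := fun p =>
    (decide (p = List.replicate (p.length - 1) true ++ [false])) &&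
    ((Encodable.decode₂ Str (p.length - 1)).elim false fun e => !(S13.chi U (e ++ p)))
    with hPdef
  have hPcomp : Computable P := by
    have hshape : Computable (fun p : Str =>
        decide (p = List.replicate (p.length - 1) true ++ [false])) :=
      (Primrec.eq.comp Primrec.id
        (Primrec.list_append.comp (S13.replicate_primrec.comp
          (Primrec.nat_sub.comp Primrec.list_length (Primrec.const 1)))
          (Primrec.const [false]))).decide.to_comp
    have ho : Computable (fun p : Str => Encodable.decode₂ Str (p.length - 1)) :=
      (Primrec.decode₂.comp
        (Primrec.nat_sub.comp Primrec.list_length (Primrec.const 1))).to_comp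
    have hg : Computable₂ (fun (p : Str) (e : Str) => !(S13.chi U (e ++ p))) :=
      ((Primrec.not.to_comp).comp (hchi.comp
        (Primrec.list_append.to_comp.comp Computable.snd Computable.fst))).to₂
    have hsec0 := Computable.option_casesOn ho (Computable.const false) hg
    have hsec : Computable (fun p : Str =>
        (Encodable.decode₂ Str (p.length - 1)).elim false
          fun e => !(S13.chi U (e ++ p))) :=
      hsec0.of_eq (fun p => by cases hx : Encodable.decode₂ Str (p.length - 1) <;> simp [hx])
    exact Primrec.and.to_comp.comp hshape hsec
  set Fm : Str →. Str := fun p => ((bif P p then some [] else none : Option Str) : Part Str)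
    with hFmdef
  have hFpart : Partrec Fm :=
    Computable.ofOption (Computable.cond hPcomp
      (Computable.const (some [])) (Computable.const none))
  have hFdom : ∀ p, (Fm p).Dom ↔ P p = true := by
    intro p
    rcases Bool.eq_false_or_eq_true (P p) with hb | hb <;> simp [hFmdef, hb]
  have hFpf : PrefixFreeDom Fm := by
    intro p q hp hq hpre
    have hp1 := (hFdom p).1 hp
    have hq1 := (hFdom q).1 hq
    rw [hPdef, Bool.and_eq_true, decide_eq_true_eq] at hp1 hq1
    have hps := hp1.1
    have hqs := hq1.1
    rw [hps, hqs] at hpre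
    have := S13.shape_prefix hpre
    rw [hps, hqs, this]
  obtain ⟨e, he⟩ := huniv Fm hFpart hFpf
  set p0 : Str := List.replicate (Encodable.encode e) true ++ [false] with hp0def
  have hlen : p0.length - 1 = Encodable.encode e := by
    rw [hp0def]
    simp
  have hP0 : P p0 = !(S13.chi U (e ++ p0)) := by
    rw [hPdef]
    simp only [hlen, Encodable.decode₂_encode, Option.elim_some]
    simp
    intro _
    exact hp0def
  have hd : (U (e ++ p0)).Dom ↔ ¬ (U (e ++ p0)).Dom := by
    constructor
    · intro h
      have h1 : (Fm p0).Dom := by rw [← he p0]; exact h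
      have h2 := (hFdom p0).1 h1
      rw [hP0] at h2
      rw [Bool.not_eq_true'] at h2
      intro _
      have := S13.chi_eq_true.2 h
      rw [h2] at this
      exact Bool.false_ne_true this
    · intro h
      exfalso
      apply h
      have h2 : S13.chi U (e ++ p0) = false := by
        rcases Bool.eq_false_or_eq_true (S13.chi U (e ++ p0)) with hb | hb
        · exact absurd (S13.chi_eq_true.1 hb) h
        · exact hb
      have h3 : P p0 = true := by rw [hP0, h2]; rfl
      have h4 : (Fm p0).Dom := (hFdom p0).2 h3
      rw [he p0]
      exact h4
  exact iff_not_self hd
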